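/- Let κ be an infinite cardinal with κ^{<κ} = κ, and let X be a Hausdorff topological space with a basis of size ≤ κ. Then the class of analytic subsets of X is closed under intersections of κ-many sets. -/

import Mathlib

open Cardinal Set

/-- The bounded topology on the generalized Baire space `^κκ`, generated by the sets
`N_s = {x : s ⊆ x}` for `s ∈ ^{<κ}κ` (initial segments). -/
def baireTopology (κ : Cardinal) : TopologicalSpace (κ.ord.ToType → κ.ord.ToType) :=
  TopologicalSpace.generateFrom
    {U | ∃ (x : κ.ord.ToType → κ.ord.ToType) (j : κ.ord.ToType), U = {y | ∀ i < j, y i = x i}}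

/-- A subset `A` of a topological space `X` is `κ`-analytic if it is the image of a
closed subset of `^κκ` (with the bounded topology) under a continuous map into `X`. -/
def kAnalytic (κ : Cardinal) {X : Type} (tX : TopologicalSpace X) (A : Set X) : Prop :=
  ∃ (C : Set (κ.ord.ToType → κ.ord.ToType)) (f : (κ.ord.ToType → κ.ord.ToType) → X),
    @IsClosed _ (baireTopology κ) C ∧ @ContinuousOn _ _ (baireTopology κ) tX f C ∧ f '' C = A

/-- The equalizer of two functions continuous on a closed set, within that set, is closed
(in a Hausdorff codomain). -/
lemma aux_eqOn_closed {Y X : Type*} [TopologicalSpace Y] [TopologicalSpace X] [T2Space X]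
    {s : Set Y} (hs : IsClosed s) {f g : Y → X} (hf : ContinuousOn f s) (hg : ContinuousOn g s) :
    IsClosed {x | x ∈ s ∧ f x = g x} := by
  have h1 : IsClosed {p : s | f p.1 = g p.1} :=
    isClosed_eq (continuousOn_iff_continuous_restrict.mp hf)
      (continuousOn_iff_continuous_restrict.mp hg)
  have h2 := hs.isClosedEmbedding_subtypeVal.isClosedMap _ h1
  convert h2 using 1
  ext x
  constructor
  · rintro ⟨hx, hfx⟩
    exact ⟨⟨x, hx⟩, hfx, rfl⟩
  · rintro ⟨⟨a, ha⟩, hfa, rfl⟩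
    exact ⟨ha, hfa⟩

/-- For `κ` infinite with `κ^{<κ} = κ` and `X` a Hausdorff space with a basis of size
`≤ κ`, the analytic subsets of `X` are closed under intersections of `κ`-many sets. -/
theorem stmt_5 (κ : Cardinal) (hinf : ℵ₀ ≤ κ) (hκ : κ ^< κ = κ)
    (X : Type) [tX : TopologicalSpace X] [T2Space X]
    (hbasis : ∃ B : Set (Set X), Cardinal.mk ↥B ≤ κ ∧ TopologicalSpace.IsTopologicalBasis B)
    (A : κ.ord.ToType → Set X) (hA : ∀ i, kAnalytic κ tX (A i)) :
    kAnalytic κ tX (⋂ i, A i) := by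
  classical
  letI tB : TopologicalSpace (κ.ord.ToType → κ.ord.ToType) := baireTopology κ
  -- κ is regular
  have hreg : κ ≤ κ.ord.cof := by
    by_contra h
    push_neg at h
    have h1 : κ < κ ^ κ.ord.cof := lt_power_cof hinf
    have h2 : κ ^ κ.ord.cof ≤ κ ^< κ := le_powerlt κ h
    rw [hκ] at h2
    exact absurd (h1.trans_le h2) (lt_irrefl κ)
  have hTne : Nonempty κ.ord.ToType := mk_ne_zero_iff.mp (by
    rw [mk_ord_toType]; exact (aleph0_pos.trans_le hinf).ne')
  obtain ⟨i₀⟩ := hTne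
  -- small subsets of κ.ord.ToType are strictly bounded
  have hbdd : ∀ S : Set κ.ord.ToType, #S < κ → ∃ j : κ.ord.ToType, ∀ x ∈ S, x < j := by
    intro S hS
    have hsmall : #S < κ.ord.cof := hS.trans_le hreg
    set E := (Ordinal.ToType.mk (o := κ.ord)) with hE
    set g : S → Ordinal := fun x => (E.symm x.1).1 + 1 with hg
    have hglt : ∀ x : S, g x < κ.ord := fun x => by
      rw [hg]
      simp only [Ordinal.add_one_eq_succ]
      exact (isSuccLimit_ord hinf).succ_lt (E.symm x.1).2
    have hsup : iSup g < κ.ord := Ordinal.iSup_lt_ord hsmall hglt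
    refine ⟨E ⟨iSup g, hsup⟩, fun x hx => ?_⟩
    have h1 : ((E.symm x : Iio κ.ord) : Ordinal) < iSup g := by
      refine lt_of_lt_of_le ?_ (Ordinal.le_iSup g ⟨x, hx⟩)
      rw [hg]
      simp only [Ordinal.add_one_eq_succ]
      exact Order.lt_succ _
    calc x = E (E.symm x) := (E.apply_symm_apply x).symm
      _ < E ⟨iSup g, hsup⟩ := E.lt_iff_lt.mpr (Subtype.coe_lt_coe.mp h1)
  -- sets defined by fixing < κ many coordinates are open
  have hopen : ∀ (S : Set κ.ord.ToType) (v : κ.ord.ToType → κ.ord.ToType), #S < κ →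
      IsOpen {x : κ.ord.ToType → κ.ord.ToType | ∀ i ∈ S, x i = v i} := by
    intro S v hS
    obtain ⟨j, hj⟩ := hbdd S hS
    have heq : {x : κ.ord.ToType → κ.ord.ToType | ∀ i ∈ S, x i = v i}
        = ⋃ y ∈ {x : κ.ord.ToType → κ.ord.ToType | ∀ i ∈ S, x i = v i}, {x | ∀ i < j, x i = y i} := by
      ext x
      constructor
      · intro hx
        exact mem_biUnion hx (fun i _ => rfl)
      · simp only [mem_iUnion, exists_prop]
        rintro ⟨y, hy, hxy⟩ i hi
        rw [hxy i (hj i hi)]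
        exact hy i hi
    rw [heq]
    have : ∀ y : κ.ord.ToType → κ.ord.ToType,
        @IsOpen _ (baireTopology κ)
          {x : κ.ord.ToType → κ.ord.ToType | ∀ i < j, x i = y i} := fun y =>
      TopologicalSpace.isOpen_generateFrom_of_mem
        (g := {U | ∃ (x : κ.ord.ToType → κ.ord.ToType) (j : κ.ord.ToType),
          U = {y : κ.ord.ToType → κ.ord.ToType | ∀ i < j, y i = x i}}) ⟨y, j, rfl⟩
    exact isOpen_biUnion fun y _ => this y
  -- a pairing bijection
  obtain ⟨e⟩ : Nonempty (κ.ord.ToType ≃ κ.ord.ToType × κ.ord.ToType) := by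
    apply Cardinal.eq.mp
    rw [Cardinal.mk_prod, mk_ord_toType, Cardinal.lift_id, mul_eq_self hinf]
  set slice : κ.ord.ToType → (κ.ord.ToType → κ.ord.ToType) → (κ.ord.ToType → κ.ord.ToType) := fun i x α => x (e.symm (i, α)) with hslice_def
  have hslice : ∀ i, Continuous (slice i) := by
    intro i
    have key : @Continuous _ _ (baireTopology κ)
        (TopologicalSpace.generateFrom
          {U | ∃ (x : κ.ord.ToType → κ.ord.ToType) (j : κ.ord.ToType),
            U = {y : κ.ord.ToType → κ.ord.ToType | ∀ i < j, y i = x i}}) (slice i) := by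
      apply continuous_generateFrom_iff.mpr
      rintro s ⟨z, j, rfl⟩
      have heq : slice i ⁻¹' {y | ∀ α < j, y α = z α}
          = {x | ∀ b ∈ (fun α => e.symm (i, α)) '' Iio j, x b = z (e b).2} := by
        ext x
        simp only [mem_preimage, mem_setOf_eq, mem_image, mem_Iio, hslice_def]
        constructor
        · rintro h b ⟨α, hα, rfl⟩
          simp only [Equiv.apply_symm_apply]
          exact h α hα
        · intro h α hα
          have := h (e.symm (i, α)) ⟨α, hα, rfl⟩
          simpa only [Equiv.apply_symm_apply] using this
      rw [heq]
      exact hopen _ _ ((mk_image_le).trans_lt (mk_Iio_ord_toType j))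
    exact key
  choose C f hC hf hCf using hA
  set F : κ.ord.ToType → (κ.ord.ToType → κ.ord.ToType) → X := fun i x => f i (slice i x) with hF
  set P : Set (κ.ord.ToType → κ.ord.ToType) := ⋂ i, slice i ⁻¹' C i with hP
  have hPclosed : IsClosed P := isClosed_iInter fun i => (hC i).preimage (hslice i)
  have hFcont : ∀ i, ContinuousOn (F i) P := fun i =>
    (hf i).comp (hslice i).continuousOn (fun x hx => mem_iInter.mp hx i)
  set D : Set (κ.ord.ToType → κ.ord.ToType) := {x | x ∈ P ∧ ∀ i, F i x = F i₀ x} with hD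
  have hDclosed : IsClosed D := by
    have heq : D = ⋂ i, {x | x ∈ P ∧ F i x = F i₀ x} := by
      ext x
      simp only [hD, mem_iInter, mem_setOf_eq]
      exact ⟨fun ⟨h1, h2⟩ i => ⟨h1, h2 i⟩, fun h => ⟨(h i₀).1, fun i => (h i).2⟩⟩
    rw [heq]
    exact isClosed_iInter fun i => aux_eqOn_closed hPclosed (hFcont i) (hFcont i₀)
  refine ⟨D, F i₀, hDclosed, (hFcont i₀).mono (fun x hx => hx.1), ?_⟩
  apply Subset.antisymm
  · rintro _ ⟨x, hx, rfl⟩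
    refine mem_iInter.mpr fun i => ?_
    rw [← hCf i, ← hx.2 i]
    exact ⟨slice i x, mem_iInter.mp hx.1 i, rfl⟩
  · intro y hy
    have hz : ∀ i, ∃ w, w ∈ C i ∧ f i w = y := by
      intro i
      have hyi := mem_iInter.mp hy i
      rw [← hCf i] at hyi
      obtain ⟨w, hw, hwy⟩ := hyi
      exact ⟨w, hw, hwy⟩
    choose w hw hfw using hz
    have hsl : ∀ i, slice i (fun β => w (e β).1 (e β).2) = w i := by
      intro i
      funext α
      simp only [hslice_def, Equiv.apply_symm_apply]
    refine ⟨fun β => w (e β).1 (e β).2, ⟨?_, ?_⟩, ?_⟩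
    · exact mem_iInter.mpr fun i => by
        simp only [mem_preimage, hsl i]; exact hw i
    · intro i
      simp only [hF, hsl i, hsl i₀, hfw i, hfw i₀]
    · simp only [hF, hsl i₀, hfw i₀]
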